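/- Let k be an algebraically closed field, let n ≥ 1, and let h₁, …, hₙ be polynomials in k[z₁, …, zₙ] such that for each i there is an integer dᵢ ≥ 1 with hᵢ = zᵢ^{dᵢ} + (terms of total degree strictly less than dᵢ), i.e. the total degree of hᵢ − zᵢ^{dᵢ} is strictly less than dᵢ. Then h₁, …, hₙ have a common zero in kⁿ, i.e. there exists a point z ∈ kⁿ with hᵢ(z) = 0 for all i. -/

import Mathlib

open MvPolynomial

namespace CommonZeroAux

variable {k : Type*} [Field k] {n : ℕ}

/-- All monomials of `p` have total degree `< m`. -/
def DegLT (m : ℕ) (p : MvPolynomial (Fin n) k) : Prop :=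
  ∀ b ∈ p.support, (b.sum fun _ e => e) < m

lemma degLT_of_totalDegree_lt {m : ℕ} {p : MvPolynomial (Fin n) k}
    (hp : p.totalDegree < m) : DegLT m p :=
  fun b hb => lt_of_le_of_lt (le_totalDegree hb) hp

lemma DegLT.add {m : ℕ} {p q : MvPolynomial (Fin n) k}
    (hp : DegLT m p) (hq : DegLT m q) : DegLT m (p + q) := by
  intro b hb
  rcases Finset.mem_union.mp (MvPolynomial.support_add hb) with hb' | hb'
  · exact hp b hb'
  · exact hq b hb'

lemma degLT_mul_aux {b c : Fin n →₀ ℕ} :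
    ((b + c).sum fun _ e => e) = (b.sum fun _ e => e) + (c.sum fun _ e => e) := by
  classical
  rw [Finsupp.sum_add_index (by simp) (by simp)]

lemma DegLT.mul_right {mp mq : ℕ} {p q : MvPolynomial (Fin n) k}
    (hp : DegLT mp p) (hq : q.totalDegree ≤ mq) : DegLT (mp + mq) (p * q) := by
  classical
  intro b hb
  obtain ⟨bp, hbp, bq, hbq, rfl⟩ := Finset.mem_add.mp (MvPolynomial.support_mul p q hb)
  rw [degLT_mul_aux]
  exact add_lt_add_of_lt_of_le (hp bp hbp) (le_trans (le_totalDegree hbq) hq)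

lemma DegLT.mul_left {mp mq : ℕ} {p q : MvPolynomial (Fin n) k}
    (hp : p.totalDegree ≤ mp) (hq : DegLT mq q) : DegLT (mp + mq) (p * q) := by
  classical
  intro b hb
  obtain ⟨bp, hbp, bq, hbq, rfl⟩ := Finset.mem_add.mp (MvPolynomial.support_mul p q hb)
  rw [degLT_mul_aux]
  exact add_lt_add_of_le_of_lt (le_trans (le_totalDegree hbp) hp) (hq bq hbq)

section Main

variable (d : Fin n → ℕ) (h : Fin n → MvPolynomial (Fin n) k)

/-- Total degree bound for `h i`. -/
lemma totalDegree_h_le (i : Fin n)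
    (he : (h i - X i ^ d i).totalDegree < d i) : (h i).totalDegree ≤ d i := by
  have : h i = X i ^ d i + (h i - X i ^ d i) := by ring
  calc (h i).totalDegree ≤ max (X i ^ d i : MvPolynomial (Fin n) k).totalDegree
        (h i - X i ^ d i).totalDegree := by
        conv_lhs => rw [this]
        exact totalDegree_add _ _
    _ ≤ d i := by
        rw [totalDegree_X_pow]
        exact max_le le_rfl he.le

lemma degLT_pow (i : Fin n) (he : (h i - X i ^ d i).totalDegree < d i) (m : ℕ) :
    DegLT (d i * m) (h i ^ m - X i ^ (d i * m)) := by
  induction m with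
  | zero => simp [DegLT]
  | succ m ih =>
    have key : h i ^ (m + 1) - X i ^ (d i * (m + 1)) =
        (h i ^ m - X i ^ (d i * m)) * h i + X i ^ (d i * m) * (h i - X i ^ d i) := by
      rw [Nat.mul_succ, pow_add]; ring
    rw [key, Nat.mul_succ]
    refine DegLT.add ?_ ?_
    · exact DegLT.mul_right ih (totalDegree_h_le d h i he)
    · refine DegLT.mul_left ?_ (degLT_of_totalDegree_lt he)
      rw [totalDegree_X_pow]

lemma degLT_prod (he : ∀ i, (h i - X i ^ d i).totalDegree < d i) (a : Fin n → ℕ)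
    (s : Finset (Fin n)) :
    DegLT (∑ i ∈ s, d i * a i) ((∏ i ∈ s, h i ^ a i) - ∏ i ∈ s, X i ^ (d i * a i)) := by
  classical
  induction s using Finset.induction with
  | empty => simp [DegLT]
  | @insert j s hjs ih =>
    rw [Finset.prod_insert hjs, Finset.prod_insert hjs, Finset.sum_insert hjs]
    have key : h j ^ a j * ∏ i ∈ s, h i ^ a i -
        X j ^ (d j * a j) * ∏ i ∈ s, X i ^ (d i * a i) =
        (h j ^ a j - X j ^ (d j * a j)) * ∏ i ∈ s, h i ^ a i +
        X j ^ (d j * a j) * ((∏ i ∈ s, h i ^ a i) - ∏ i ∈ s, X i ^ (d i * a i)) := by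
      ring
    rw [key]
    refine DegLT.add ?_ ?_
    · refine DegLT.mul_right (degLT_pow d h j (he j) (a j)) ?_
      calc (∏ i ∈ s, h i ^ a i).totalDegree ≤ ∑ i ∈ s, (h i ^ a i).totalDegree :=
            totalDegree_finset_prod s _
        _ ≤ ∑ i ∈ s, d i * a i := by
            refine Finset.sum_le_sum fun i _ => ?_
            calc (h i ^ a i).totalDegree ≤ a i * (h i).totalDegree := totalDegree_pow _ _
              _ ≤ a i * d i := Nat.mul_le_mul_left _ (totalDegree_h_le d h i (he i))
              _ = d i * a i := Nat.mul_comm _ _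
    · refine DegLT.mul_left ?_ ih
      rw [totalDegree_X_pow]

/-- product of `X i ^ c i` over all `i` is the corresponding monomial. -/
lemma prod_X_pow_eq (c : Fin n → ℕ) :
    (∏ i, X i ^ c i : MvPolynomial (Fin n) k) =
      monomial (Finsupp.equivFunOnFinite.symm c) 1 := by
  classical
  rw [← prod_X_pow_eq_monomial]
  refine (Finset.prod_subset (Finset.subset_univ _) ?_).symm
  · intro i _ hi
    have : (Finsupp.equivFunOnFinite.symm c) i = 0 := by
      simpa using Finsupp.notMem_support_iff.mp hi
    have hc : c i = 0 := by simpa using this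
    simp [hc]

variable (hd : ∀ i, 1 ≤ d i) (he : ∀ i, (h i - X i ^ d i).totalDegree < d i)

/-- The weighted degree monomial map. -/
noncomputable def D (a : Fin n →₀ ℕ) : Fin n →₀ ℕ :=
  Finsupp.equivFunOnFinite.symm fun i => d i * a i

lemma D_apply (a : Fin n →₀ ℕ) (i : Fin n) : D d a i = d i * a i := rfl

include hd in
lemma D_injective : Function.Injective (D d) := by
  intro a b hab
  ext i
  have := congrArg (fun f => f i) hab
  simp only [D_apply] at this
  exact Nat.eq_of_mul_eq_mul_left (hd i) this

lemma D_degree (a : Fin n →₀ ℕ) : ((D d a).sum fun _ e => e) = ∑ i, d i * a i := by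
  rw [Finsupp.sum_fintype _ _ (fun _ => rfl)]
  rfl

include hd he in
/-- Key injectivity: `aeval h` kills no nonzero polynomial. -/
lemma aeval_injective : Function.Injective (aeval h : MvPolynomial (Fin n) k →ₐ[k] _) := by
  classical
  rw [injective_iff_map_eq_zero]
  intro F hF
  by_contra hF0
  -- weighted degree
  set w : (Fin n →₀ ℕ) → ℕ := fun b => ∑ i, d i * b i with hw
  have hsupp : F.support.Nonempty := Finset.nonempty_iff_ne_empty.mpr (mt MvPolynomial.support_eq_empty.mp hF0)
  obtain ⟨a₀, ha₀, hmax⟩ := Finset.exists_mem_eq_sup F.support hsupp w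
  -- compute the coefficient of `D d a₀` in `aeval h F`
  have hcoeff : coeff (D d a₀) (aeval h F) = coeff a₀ F := by
    rw [aeval_def, eval₂_eq']
    rw [MvPolynomial.coeff_sum]
    have hterm : ∀ b ∈ F.support,
        coeff (D d a₀) ((algebraMap k (MvPolynomial (Fin n) k)) (coeff b F) *
          ∏ i, h i ^ b i) = if b = a₀ then coeff a₀ F else 0 := by
      intro b hb
      have hbw : w b ≤ w a₀ := by
        rw [← hmax]; exact Finset.le_sup hb
      have hsplit : (∏ i, h i ^ b i : MvPolynomial (Fin n) k) =
          monomial (D d b) 1 + ((∏ i, h i ^ b i) - ∏ i, X i ^ (d i * b i)) := by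
        rw [show (monomial (D d b) (1:k) : MvPolynomial (Fin n) k) =
          ∏ i, X i ^ (d i * b i) from (prod_X_pow_eq _).symm]; ring
      have hR : DegLT (w b) ((∏ i, h i ^ b i) - ∏ i, X i ^ (d i * b i)) := by
        simpa using degLT_prod d h he b Finset.univ
      have hRcoeff : coeff (D d a₀) ((∏ i, h i ^ b i) - ∏ i, X i ^ (d i * b i)) = 0 := by
        by_contra hne
        have := hR _ (Finsupp.mem_support_iff.mpr hne)
        rw [D_degree] at this
        exact absurd (lt_of_lt_of_le this hbw) (by simp [w])
      have halg : (algebraMap k (MvPolynomial (Fin n) k)) (coeff b F) = C (coeff b F) := rfl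
      rw [halg, MvPolynomial.coeff_C_mul, hsplit, MvPolynomial.coeff_add, hRcoeff,
        MvPolynomial.coeff_monomial]
      by_cases hba : b = a₀
      · subst hba; simp
      · have : ¬ D d b = D d a₀ := fun hc => hba (D_injective d hd hc)
        simp [this, hba]
    rw [Finset.sum_congr rfl hterm, Finset.sum_ite_eq' F.support a₀ (fun _ => coeff a₀ F)]
    simp [ha₀]
  rw [hF, MvPolynomial.coeff_zero] at hcoeff
  exact (Finsupp.mem_support_iff.mp ha₀) hcoeff.symm

include hd he in
/-- Module finiteness of the target over the image of `aeval h`. -/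
lemma aeval_finite : RingHom.Finite ((aeval h : MvPolynomial (Fin n) k →ₐ[k] _).toRingHom) := by
  classical
  letI alg : Algebra (MvPolynomial (Fin n) k) (MvPolynomial (Fin n) k) :=
    ((aeval h : MvPolynomial (Fin n) k →ₐ[k] _).toRingHom).toAlgebra
  letI : SMul (MvPolynomial (Fin n) k) (MvPolynomial (Fin n) k) := alg.toSMul
  letI : Module (MvPolynomial (Fin n) k) (MvPolynomial (Fin n) k) := alg.toModule
  -- generating monomials
  set S : Finset (MvPolynomial (Fin n) k) :=
    (Fintype.piFinset fun i => Finset.range (d i)).image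
      (fun a => monomial (Finsupp.equivFunOnFinite.symm a) (1 : k)) with hS
  set M : Submodule (MvPolynomial (Fin n) k) (MvPolynomial (Fin n) k) :=
    Submodule.span (MvPolynomial (Fin n) k) (S : Set (MvPolynomial (Fin n) k)) with hM
  have hsmul : ∀ (r x : MvPolynomial (Fin n) k), r • x = aeval h r * x := fun r x => rfl
  have key : ∀ s : ℕ, ∀ p : MvPolynomial (Fin n) k, p.totalDegree ≤ s → p ∈ M := by
    intro s
    induction s using Nat.strong_induction_on with
    | _ s IH =>
      -- first reduce to monomials with coefficient 1
      suffices hmono : ∀ b : Fin n →₀ ℕ, (b.sum fun _ e => e) ≤ s → monomial b (1 : k) ∈ M by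
        intro p hp
        rw [← support_sum_monomial_coeff p]
        refine Submodule.sum_mem _ fun b hb => ?_
        have h1 : monomial b (coeff b p) = (C (coeff b p) : MvPolynomial (Fin n) k) •
            monomial b (1 : k) := by
          rw [hsmul, aeval_C, MvPolynomial.algebraMap_eq, C_mul_monomial, mul_one]
        rw [h1]
        refine Submodule.smul_mem _ _ (hmono b ?_)
        calc (b.sum fun _ e => e) ≤ p.totalDegree := le_totalDegree hb
          _ ≤ s := hp
      intro b hb
      by_cases hcase : ∀ i, b i < d i
      · refine Submodule.subset_span ?_
        rw [hS]
        simp only [Finset.coe_image, Set.mem_image, Finset.mem_coe, Fintype.mem_piFinset,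
          Finset.mem_range]
        exact ⟨⇑b, hcase, by rw [Finsupp.equivFunOnFinite_symm_coe]⟩
      · push_neg at hcase
        obtain ⟨j, hj⟩ := hcase
        set b' : Fin n →₀ ℕ := b - Finsupp.single j (d j) with hb'
        have hle : Finsupp.single j (d j) ≤ b := Finsupp.single_le_iff.mpr hj
        have hb'add : b' + Finsupp.single j (d j) = b := tsub_add_cancel_of_le hle
        have hsum : (b'.sum fun _ e => e) + d j = (b.sum fun _ e => e) := by
          rw [← hb'add, degLT_mul_aux]
          simp [Finsupp.sum_single_index]
        have hb'lt : (b'.sum fun _ e => e) < (b.sum fun _ e => e) := by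
          have h1 := hd j; omega
        have hkey : monomial b (1 : k) =
            monomial b' 1 * h j - monomial b' 1 * (h j - X j ^ d j) := by
          have : monomial b' (1 : k) * X j ^ d j = monomial b 1 := by
            rw [X_pow_eq_monomial, monomial_mul, hb'add, mul_one]
          rw [← this]; ring
        rw [hkey]
        refine sub_mem ?_ ?_
        · -- `monomial b' 1 * h j = (X j) • monomial b' 1`
          have hXsmul : monomial b' (1 : k) * h j =
              (X j : MvPolynomial (Fin n) k) • monomial b' (1 : k) := by
            rw [hsmul, aeval_X, mul_comm]
          rw [hXsmul]
          refine Submodule.smul_mem _ _ ?_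
          have hb's : (b'.sum fun _ e => e) < s := lt_of_lt_of_le hb'lt hb
          have := IH (b'.sum fun _ e => e) hb's
          -- monomial b' 1 has totalDegree = b'.sum
          refine this _ ?_
          rw [totalDegree_monomial _ (one_ne_zero (α := k))]
        · -- lower-degree term
          have hdeg : (monomial b' (1 : k) * (h j - X j ^ d j)).totalDegree <
              (b.sum fun _ e => e) := by
            calc (monomial b' (1 : k) * (h j - X j ^ d j)).totalDegree ≤
                (monomial b' (1 : k)).totalDegree + (h j - X j ^ d j).totalDegree :=
                  totalDegree_mul _ _
              _ < (b'.sum fun _ e => e) + d j := by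
                  rw [totalDegree_monomial _ (one_ne_zero (α := k))]
                  exact Nat.add_lt_add_left (he j) _
              _ = (b.sum fun _ e => e) := hsum
          exact IH _ (lt_of_lt_of_le hdeg hb) _ le_rfl
  have hfin : Module.Finite (MvPolynomial (Fin n) k) (MvPolynomial (Fin n) k) :=
    ⟨⟨S, eq_top_iff.mpr fun p _ => key p.totalDegree p le_rfl⟩⟩
  exact hfin

end Main

end CommonZeroAux

/-- Lemma 5.2 (Lemma `lem:aux`) of the paper: if each `hᵢ` is `zᵢ^{dᵢ}` plus terms of
total degree `< dᵢ`, then the `hᵢ` have a common zero over an algebraically closed field. -/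
theorem common_zero_of_monic_in_own_variable
    (k : Type*) [Field k] [IsAlgClosed k] (n : ℕ) (hn : 1 ≤ n)
    (h : Fin n → MvPolynomial (Fin n) k)
    (hdeg : ∀ i : Fin n, ∃ d : ℕ, 1 ≤ d ∧ (h i - X i ^ d).totalDegree < d) :
    ∃ z : Fin n → k, ∀ i : Fin n, eval z (h i) = 0 := by
  classical
  choose d hd he using hdeg
  set f : MvPolynomial (Fin n) k →+* MvPolynomial (Fin n) k :=
    (aeval h : MvPolynomial (Fin n) k →ₐ[k] _).toRingHom with hf
  have hinj : Function.Injective f := CommonZeroAux.aeval_injective d h hd he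
  have hint : f.IsIntegral :=
    (CommonZeroAux.aeval_finite d h hd he).to_isIntegral
  -- the ideal generated by the variables is proper
  set J : Ideal (MvPolynomial (Fin n) k) := Ideal.span (Set.range X) with hJ
  have hJne : J ≠ ⊤ := by
    intro htop
    have h1 : (1 : MvPolynomial (Fin n) k) ∈ J := htop ▸ Submodule.mem_top
    have hker : J ≤ RingHom.ker (eval (0 : Fin n → k)) := by
      rw [hJ, Ideal.span_le]
      rintro _ ⟨i, rfl⟩
      simp [RingHom.mem_ker]
    have := hker h1
    simp [RingHom.mem_ker] at this
  have hmapne : Ideal.map f J ≠ ⊤ := fun htop =>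
    hJne ((Ideal.map_eq_top_iff f hinj hint).mp htop)
  -- the ideal generated by the `h i` is inside `map f J`
  set I₀ : Ideal (MvPolynomial (Fin n) k) := Ideal.span (Set.range h) with hI₀
  have hI₀le : I₀ ≤ Ideal.map f J := by
    rw [hI₀, Ideal.span_le]
    rintro _ ⟨i, rfl⟩
    have : h i = f (X i) := by simp [hf]
    rw [this]
    exact Ideal.mem_map_of_mem f (Ideal.subset_span ⟨i, rfl⟩)
  have hI₀ne : I₀.radical ≠ ⊤ := by
    intro htop
    have : I₀ = ⊤ := Ideal.radical_eq_top.mp htop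
    exact hmapne (top_le_iff.mp (this ▸ hI₀le))
  -- Nullstellensatz
  have hNull := MvPolynomial.vanishingIdeal_zeroLocus_eq_radical (K := k) I₀
  have hne : (MvPolynomial.zeroLocus k I₀).Nonempty := by
    rw [Set.nonempty_iff_ne_empty]
    intro hempty
    rw [hempty, MvPolynomial.vanishingIdeal_empty] at hNull
    exact hI₀ne hNull.symm
  obtain ⟨z, hz⟩ := hne
  refine ⟨z, fun i => ?_⟩
  exact MvPolynomial.mem_zeroLocus_iff.mp hz _ (Ideal.subset_span ⟨i, rfl⟩)
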